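/- Let X ∈ ℝ^{d×n} with n ≥ 1, λ > 0, μ > 0, 0 < p, q < 2, and let (Z_t)_{t≥1} be a sequence in ℝ^{n×n} such that for every t, p·Z_{t+1}M_t + λq·Xᵀ(XZ_{t+1} − X)N_t = 0, where M_t = (Z_tᵀZ_t + μ²I)^{p/2−1} and N_t is the diagonal matrix with (N_t)_{ii} = (‖(XZ_t − X)_i‖_2² + μ²)^{q/2−1}. Then lim_{t→∞} ‖Z_t − Z_{t+1}‖_F = 0. -/

import Mathlib

open Matrix

/-- Real power of a real symmetric matrix, defined through the spectral decomposition
`A = U · diag(λ₁,…,λₙ) · Uᵀ` as `A^r = U · diag(λ₁^r,…,λₙ^r) · Uᵀ`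
(junk value `0` if `A` is not symmetric). -/
noncomputable def mpow {n : ℕ} (A : Matrix (Fin n) (Fin n) ℝ) (r : ℝ) :
    Matrix (Fin n) (Fin n) ℝ :=
  if hA : A.IsHermitian then hA.cfc (fun x : ℝ => x ^ r) else 0

/-- The smoothed LRR objective
`J(Z, μ) = Tr((ZᵀZ + μ²I)^{p/2}) + λ·∑ᵢ (‖(XZ − X)ᵢ‖₂² + μ²)^{q/2}`,
where `(XZ − X)ᵢ` denotes the `i`-th column of `XZ − X`. -/
noncomputable def smoothJ {d n : ℕ} (X : Matrix (Fin d) (Fin n) ℝ) (lam p q : ℝ)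
    (Z : Matrix (Fin n) (Fin n) ℝ) (μ : ℝ) : ℝ :=
  (mpow (Zᵀ * Z + μ ^ 2 • (1 : Matrix (Fin n) (Fin n) ℝ)) (p / 2)).trace +
    lam * ∑ i, (∑ j, ((X * Z - X) j i) ^ 2 + μ ^ 2) ^ (q / 2)

section basic
variable {m : ℕ} {A : Matrix (Fin m) (Fin m) ℝ}

lemma mpow_eq (hA : A.IsHermitian) (r : ℝ) :
    mpow A r = (hA.eigenvectorUnitary : Matrix (Fin m) (Fin m) ℝ) *
      diagonal (fun i => hA.eigenvalues i ^ r) *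
      (hA.eigenvectorUnitary : Matrix (Fin m) (Fin m) ℝ)ᵀ := by
  rw [mpow, dif_pos hA, Matrix.IsHermitian.cfc]
  simp [Function.comp_def, Matrix.star_eq_conjTranspose, Matrix.conjTranspose]
  rfl

lemma spectral (hA : A.IsHermitian) :
    A = (hA.eigenvectorUnitary : Matrix (Fin m) (Fin m) ℝ) *
      diagonal hA.eigenvalues *
      (hA.eigenvectorUnitary : Matrix (Fin m) (Fin m) ℝ)ᵀ := by
  have := hA.spectral_theorem
  simpa [Matrix.star_eq_conjTranspose, conjTranspose_eq_transpose_of_trivial] using this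

lemma Ut_mul_U (hA : A.IsHermitian) :
    (hA.eigenvectorUnitary : Matrix (Fin m) (Fin m) ℝ)ᵀ *
      (hA.eigenvectorUnitary : Matrix (Fin m) (Fin m) ℝ) = 1 := by
  rw [← conjTranspose_eq_transpose_of_trivial, ← star_eq_conjTranspose]
  exact Unitary.coe_star_mul_self _

lemma U_mul_Ut (hA : A.IsHermitian) :
    (hA.eigenvectorUnitary : Matrix (Fin m) (Fin m) ℝ) *
      (hA.eigenvectorUnitary : Matrix (Fin m) (Fin m) ℝ)ᵀ = 1 := by
  rw [← conjTranspose_eq_transpose_of_trivial, ← star_eq_conjTranspose]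
  exact Unitary.coe_mul_star_self _

lemma trace_diag_mul (g : Fin m → ℝ) (M : Matrix (Fin m) (Fin m) ℝ) :
    (diagonal g * M).trace = ∑ j, g j * M j j := by
  simp [Matrix.trace, Matrix.diag, Matrix.mul_apply, Matrix.diagonal_apply]

lemma trace_mpow (hA : A.IsHermitian) (r : ℝ) :
    (mpow A r).trace = ∑ i, hA.eigenvalues i ^ r := by
  rw [mpow_eq hA r, trace_mul_cycle, Ut_mul_U hA, one_mul, trace_diagonal]

lemma mpow_transpose (hA : A.IsHermitian) (r : ℝ) : (mpow A r)ᵀ = mpow A r := by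
  rw [mpow_eq hA r]
  rw [transpose_mul, transpose_mul, transpose_transpose, diagonal_transpose]
  simp only [mul_assoc]

/-- Spectral data of a positive definite real matrix, packaged opaquely. -/
lemma posdef_spectral_data (hA : A.PosDef) :
    ∃ (U : Matrix (Fin m) (Fin m) ℝ) (e : Fin m → ℝ),
      (∀ i, 0 < e i) ∧ Uᵀ * U = 1 ∧ U * Uᵀ = 1 ∧ A = U * diagonal e * Uᵀ ∧
        (∀ r : ℝ, mpow A r = U * diagonal (fun i => e i ^ r) * Uᵀ) ∧
        (∀ r : ℝ, (mpow A r).trace = ∑ i, e i ^ r) :=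
  ⟨_, _, hA.eigenvalues_pos, Ut_mul_U hA.1, U_mul_Ut hA.1, spectral hA.1,
    fun r => mpow_eq hA.1 r, fun r => trace_mpow hA.1 r⟩

end basic

lemma tangent {x y r : ℝ} (hx : 0 < x) (hy : 0 < y) (hr0 : 0 < r) (hr1 : r < 1) :
    x ^ r ≤ y ^ r + r * y ^ (r - 1) * (x - y) := by
  have amgm := Real.geom_mean_le_arith_mean2_weighted hr0.le (by linarith : (0:ℝ) ≤ 1 - r)
    hx.le hy.le (by ring)
  have hyp : (0:ℝ) < y ^ (r - 1) := Real.rpow_pos_of_pos hy _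
  have h1 : y ^ (1 - r) * y ^ (r - 1) = 1 := by
    rw [← Real.rpow_add hy]; norm_num
  have h2 : y ^ (r - 1) * y = y ^ r := by
    rw [← Real.rpow_add_one hy.ne' (r-1)]; norm_num
  have h3 : x ^ r * y ^ (1 - r) * y ^ (r - 1) = x ^ r := by
    rw [mul_assoc, h1, mul_one]
  have key := mul_le_mul_of_nonneg_right amgm hyp.le
  rw [h3] at key
  calc x ^ r ≤ (r * x + (1 - r) * y) * y ^ (r - 1) := key
    _ = y ^ r + r * y ^ (r - 1) * (x - y) := by rw [← h2]; ring

/-- Klein-type inequality for the concave trace function `Tr(A^r)`, `0 < r < 1`. -/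
lemma klein {m : ℕ} {S T : Matrix (Fin m) (Fin m) ℝ} (hS : S.PosDef) (hT : T.PosDef)
    {r : ℝ} (hr0 : 0 < r) (hr1 : r < 1) :
    (mpow S r).trace ≤ (mpow T r).trace + r * (mpow T (r - 1) * (S - T)).trace := by
  obtain ⟨U, d, hdpos, hUtU, hUUt, hSspec, hmS, -⟩ := posdef_spectral_data hS
  obtain ⟨V, f, hfpos, hVtV, hVVt, hTspec, hmT, -⟩ := posdef_spectral_data hT
  set W := Vᵀ * U with hW
  have hWtW : Wᵀ * W = 1 := by
    rw [hW, transpose_mul, transpose_transpose, mul_assoc, ← mul_assoc V, hVVt, one_mul, hUtU]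
  have hWWt : W * Wᵀ = 1 := by
    rw [hW, transpose_mul, transpose_transpose, mul_assoc, ← mul_assoc U, hUUt, one_mul, hVtV]
  have hcol : ∀ i, ∑ j, W j i ^ 2 = 1 := fun i => by
    have := congrFun (congrFun hWtW i) i
    simpa [Matrix.mul_apply, Matrix.one_apply, sq] using this
  have hrow : ∀ j, ∑ i, W j i ^ 2 = 1 := fun j => by
    have := congrFun (congrFun hWWt j) j
    simpa [Matrix.mul_apply, Matrix.one_apply, sq] using this
  have e1 : (mpow S r).trace = ∑ i, d i ^ r := by
    rw [hmS r, trace_mul_cycle, hUtU, one_mul, trace_diagonal]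
  have e2 : (mpow T r).trace = ∑ j, f j ^ r := by
    rw [hmT r, trace_mul_cycle, hVtV, one_mul, trace_diagonal]
  have e3 : (mpow T (r - 1) * T).trace = ∑ j, f j ^ (r - 1) * f j := by
    rw [hmT (r - 1), hTspec,
      show V * diagonal (fun i => f i ^ (r-1)) * Vᵀ * (V * diagonal f * Vᵀ)
        = V * ((diagonal (fun i => f i ^ (r-1)) * (Vᵀ * V)) * diagonal f) * Vᵀ by
        simp only [mul_assoc],
      hVtV, mul_one, diagonal_mul_diagonal, trace_mul_cycle, hVtV, one_mul, trace_diagonal]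
  have e4 : (mpow T (r - 1) * S).trace
      = ∑ j, f j ^ (r - 1) * ∑ i, W j i ^ 2 * d i := by
    rw [hmT (r - 1), hSspec,
      show V * diagonal (fun i => f i ^ (r-1)) * Vᵀ * (U * diagonal d * Uᵀ)
        = V * (diagonal (fun i => f i ^ (r-1)) * (W * diagonal d * Wᵀ)) * Vᵀ by
        rw [hW]; simp only [transpose_mul, transpose_transpose, mul_assoc, hVVt, mul_one],
      trace_mul_cycle, ← mul_assoc, hVtV, one_mul, trace_diag_mul]
    congr 1; ext j
    congr 1
    rw [Matrix.mul_apply]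
    congr 1; ext i
    rw [Matrix.mul_diagonal, Matrix.transpose_apply]
    ring
  have etr : (mpow T (r - 1) * (S - T)).trace
      = (∑ j, f j ^ (r - 1) * ∑ i, W j i ^ 2 * d i) - ∑ j, f j ^ (r - 1) * f j := by
    rw [mul_sub, trace_sub, e3, e4]
  rw [e1, e2, etr]
  have key : ∀ j, ∀ i, W j i ^ 2 * d i ^ r
      ≤ W j i ^ 2 * (f j ^ r + r * f j ^ (r - 1) * (d i - f j)) := fun j i =>
    mul_le_mul_of_nonneg_left (tangent (hdpos i) (hfpos j) hr0 hr1) (sq_nonneg _)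
  calc ∑ i, d i ^ r = ∑ i, (∑ j, W j i ^ 2) * d i ^ r := by
        simp [hcol]
    _ = ∑ j, ∑ i, W j i ^ 2 * d i ^ r := by
        rw [Finset.sum_comm]; simp [Finset.sum_mul]
    _ ≤ ∑ j, ∑ i, W j i ^ 2 * (f j ^ r + r * f j ^ (r - 1) * (d i - f j)) :=
        Finset.sum_le_sum fun j _ => Finset.sum_le_sum fun i _ => key j i
    _ = ∑ j, (f j ^ r + r * (f j ^ (r - 1) * (∑ i, W j i ^ 2 * d i) - f j ^ (r - 1) * f j)) := by
        refine Finset.sum_congr rfl fun j _ => ?_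
        have h := hrow j
        calc ∑ i, W j i ^ 2 * (f j ^ r + r * f j ^ (r - 1) * (d i - f j))
            = (∑ i, W j i ^ 2) * (f j ^ r - r * f j ^ (r - 1) * f j)
              + r * f j ^ (r - 1) * ∑ i, W j i ^ 2 * d i := by
              rw [Finset.sum_mul, Finset.mul_sum, ← Finset.sum_add_distrib]
              exact Finset.sum_congr rfl fun i _ => by ring
          _ = f j ^ r + r * (f j ^ (r - 1) * (∑ i, W j i ^ 2 * d i) - f j ^ (r - 1) * f j) := by
              rw [h]; ring
    _ = ∑ j, f j ^ r + r * ((∑ j, f j ^ (r - 1) * ∑ i, W j i ^ 2 * d i) - ∑ j, f j ^ (r - 1) * f j)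
        := by
        rw [Finset.sum_add_distrib, ← Finset.sum_sub_distrib, Finset.mul_sum]

lemma trace_transpose_mul' {m k : ℕ} (P Q : Matrix (Fin k) (Fin m) ℝ) :
    (Pᵀ * Q).trace = ∑ i, ∑ j, P j i * Q j i := by
  simp [Matrix.trace, Matrix.diag, Matrix.mul_apply]

lemma trace_transpose_mul_self {m : ℕ} (P : Matrix (Fin m) (Fin m) ℝ) :
    (Pᵀ * P).trace = ∑ i, ∑ j, P j i ^ 2 := by
  rw [trace_transpose_mul']; simp [sq]

lemma posDef_S {d' n : ℕ} (Z : Matrix (Fin d') (Fin n) ℝ) {μ : ℝ} (hμ : 0 < μ) :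
    (Zᵀ * Z + μ ^ 2 • (1 : Matrix (Fin n) (Fin n) ℝ)).PosDef := by
  have h1 : (Zᵀ * Z).PosSemidef := by
    have := Matrix.posSemidef_conjTranspose_mul_self Z
    rwa [conjTranspose_eq_transpose_of_trivial] at this
  have h2 : (μ ^ 2 • (1 : Matrix (Fin n) (Fin n) ℝ)).PosDef := by
    have h3 : μ ^ 2 • (1 : Matrix (Fin n) (Fin n) ℝ) = diagonal (fun _ => μ ^ 2) := by
      ext i j
      by_cases h : i = j <;> simp [Matrix.one_apply, Matrix.diagonal_apply, h]
    rw [h3]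
    exact Matrix.posDef_diagonal_iff.mpr fun i => by positivity
  exact Matrix.PosDef.posSemidef_add h1 h2

lemma quad_lb {m : ℕ} {U : Matrix (Fin m) (Fin m) ℝ} (hUtU : Uᵀ * U = 1)
    (hUUt : U * Uᵀ = 1) {w : Fin m → ℝ} {c : ℝ} (hc : ∀ i, c ≤ w i) (hc0 : 0 ≤ c)
    (Δ : Matrix (Fin m) (Fin m) ℝ) :
    c * ∑ i, ∑ j, Δ i j ^ 2 ≤ (Δᵀ * Δ * (U * diagonal w * Uᵀ)).trace := by
  have key : (Δᵀ * Δ * (U * diagonal w * Uᵀ)).trace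
      = ∑ i, w i * ∑ k, (Δ * U) k i ^ 2 := by
    rw [show Δᵀ * Δ * (U * diagonal w * Uᵀ) = Δᵀ * Δ * U * diagonal w * Uᵀ by
      simp only [mul_assoc]]
    rw [trace_mul_cycle,
      show Uᵀ * (Δᵀ * Δ * U) * diagonal w = (Δ * U)ᵀ * (Δ * U) * diagonal w by
        rw [transpose_mul]; simp only [mul_assoc],
      trace_mul_comm, trace_diag_mul]
    refine Finset.sum_congr rfl fun i _ => ?_
    have h : ((Δ * U)ᵀ * (Δ * U)) i i = ∑ k, (Δ * U) k i ^ 2 := by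
      rw [Matrix.mul_apply]
      exact Finset.sum_congr rfl fun k _ => by rw [Matrix.transpose_apply, sq]
    rw [h]
  have hQ : ∑ i, ∑ k, (Δ * U) k i ^ 2 = ∑ i, ∑ j, Δ i j ^ 2 := by
    rw [← trace_transpose_mul_self,
      show (Δ * U)ᵀ * (Δ * U) = Uᵀ * (Δᵀ * Δ) * U by
        rw [transpose_mul]; simp only [mul_assoc],
      trace_mul_cycle, hUUt, one_mul, trace_transpose_mul_self]
    exact Finset.sum_comm
  rw [key, ← hQ, Finset.mul_sum]
  exact Finset.sum_le_sum fun i _ => mul_le_mul_of_nonneg_right (hc i)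
    (Finset.sum_nonneg fun k _ => sq_nonneg _)

lemma trace_mpow_nonneg {m : ℕ} {A : Matrix (Fin m) (Fin m) ℝ} (hA : A.PosDef) (r : ℝ) :
    0 ≤ (mpow A r).trace := by
  rw [trace_mpow hA.1]
  exact Finset.sum_nonneg fun i _ => Real.rpow_nonneg (hA.eigenvalues_pos i).le _

lemma trace_le_smoothJ {d n : ℕ} (X : Matrix (Fin d) (Fin n) ℝ) {lam p q μ : ℝ}
    (hlam : 0 ≤ lam) (Z : Matrix (Fin n) (Fin n) ℝ) :
    (mpow (Zᵀ * Z + μ ^ 2 • (1 : Matrix (Fin n) (Fin n) ℝ)) (p / 2)).trace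
      ≤ smoothJ X lam p q Z μ := by
  refine le_add_of_nonneg_right (mul_nonneg hlam (Finset.sum_nonneg fun i _ => ?_))
  refine Real.rpow_nonneg ?_ _
  have h : (0:ℝ) ≤ ∑ j, ((X * Z - X) j i) ^ 2 := Finset.sum_nonneg fun j _ => sq_nonneg _
  positivity

lemma smoothJ_nonneg {d n : ℕ} (X : Matrix (Fin d) (Fin n) ℝ) {lam p q μ : ℝ}
    (hlam : 0 ≤ lam) (hμ : 0 < μ) (Z : Matrix (Fin n) (Fin n) ℝ) :
    0 ≤ smoothJ X lam p q Z μ :=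
  le_trans (trace_mpow_nonneg (posDef_S Z hμ) _) (trace_le_smoothJ X hlam Z)

lemma trQuad_nonneg {n' : ℕ} {μ : ℝ} (hμ : 0 < μ) (r : ℝ)
    (Zt Δ : Matrix (Fin n') (Fin n') ℝ) :
    0 ≤ (Δᵀ * Δ * mpow (Ztᵀ * Zt + μ ^ 2 • (1 : Matrix (Fin n') (Fin n') ℝ)) r).trace := by
  obtain ⟨U, e, hepos, hUtU, hUUt, hspec, hm, htrf⟩ := posdef_spectral_data (posDef_S Zt hμ)
  rw [hm]
  have := quad_lb hUtU hUUt (w := fun i => e i ^ r) (c := 0)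
    (fun i => (Real.rpow_pos_of_pos (hepos i) _).le) le_rfl Δ
  simpa using this

lemma trQuad_lb {n' : ℕ} {μ p c : ℝ} (hμ : 0 < μ) (hp0 : 0 < p) (hp2 : p < 2) (hc : 0 ≤ c)
    (Zt Δ : Matrix (Fin n') (Fin n') ℝ)
    (htr : (mpow (Ztᵀ * Zt + μ ^ 2 • (1 : Matrix (Fin n') (Fin n') ℝ)) (p / 2)).trace ≤ c) :
    (max (c ^ (2 / p)) 1) ^ (p / 2 - 1) * (∑ i, ∑ j, Δ i j ^ 2)
      ≤ (Δᵀ * Δ *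
        mpow (Ztᵀ * Zt + μ ^ 2 • (1 : Matrix (Fin n') (Fin n') ℝ)) (p / 2 - 1)).trace := by
  obtain ⟨U, e, hepos, hUtU, hUUt, hspec, hm, htrf⟩ := posdef_spectral_data (posDef_S Zt hμ)
  set Bd := max (c ^ (2 / p)) 1 with hBd
  have hBdpos : (0:ℝ) < Bd := lt_of_lt_of_le one_pos (le_max_right _ _)
  have he_le : ∀ i, e i ≤ Bd := by
    intro i
    have h1 : e i ^ (p / 2) ≤ c := by
      refine le_trans ?_ htr
      rw [htrf]
      exact Finset.single_le_sum (fun j _ => Real.rpow_nonneg (hepos j).le _) (Finset.mem_univ i)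
    have h2 : (e i ^ (p / 2)) ^ (2 / p) ≤ c ^ (2 / p) :=
      Real.rpow_le_rpow (Real.rpow_nonneg (hepos i).le _) h1 (by positivity)
    have h3 : (e i ^ (p / 2)) ^ (2 / p) = e i := by
      rw [← Real.rpow_mul (hepos i).le, show p / 2 * (2 / p) = 1 by field_simp, Real.rpow_one]
    calc e i = (e i ^ (p/2)) ^ (2/p) := h3.symm
      _ ≤ c ^ (2/p) := h2
      _ ≤ Bd := le_max_left _ _
  have hw : ∀ i, Bd ^ (p / 2 - 1) ≤ e i ^ (p / 2 - 1) := fun i =>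
    Real.rpow_le_rpow_of_nonpos (hepos i) (he_le i) (by linarith)
  rw [hm]
  exact quad_lb hUtU hUUt hw (Real.rpow_pos_of_pos hBdpos _).le Δ

lemma step_ineq {d n : ℕ} (X : Matrix (Fin d) (Fin n) ℝ) {lam p q μ : ℝ}
    (hlam : 0 < lam) (hμ : 0 < μ) (hp0 : 0 < p) (hp2 : p < 2) (hq0 : 0 < q) (hq2 : q < 2)
    (A B : Matrix (Fin n) (Fin n) ℝ)
    (hupd : p • (B * mpow (Aᵀ * A + μ ^ 2 • (1 : Matrix (Fin n) (Fin n) ℝ)) (p / 2 - 1)) +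
      (lam * q) • (Xᵀ * ((X * B - X) *
        Matrix.diagonal fun i => (∑ j, ((X * A - X) j i) ^ 2 + μ ^ 2) ^ (q / 2 - 1))) = 0) :
    smoothJ X lam p q B μ + (p / 2) *
      ((A - B)ᵀ * (A - B) *
        mpow (Aᵀ * A + μ ^ 2 • (1 : Matrix (Fin n) (Fin n) ℝ)) (p / 2 - 1)).trace
      ≤ smoothJ X lam p q A μ := by
  set SA := Aᵀ * A + μ ^ 2 • (1 : Matrix (Fin n) (Fin n) ℝ) with hSAdef
  set SB := Bᵀ * B + μ ^ 2 • (1 : Matrix (Fin n) (Fin n) ℝ) with hSBdef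
  set M := mpow SA (p / 2 - 1) with hMdef
  set ν : Fin n → ℝ := fun i => (∑ j, ((X * A - X) j i) ^ 2 + μ ^ 2) ^ (q / 2 - 1) with hν
  set N := Matrix.diagonal ν with hNdef
  set Δ := A - B with hΔdef
  set a : Fin n → ℝ := fun i => ∑ j, ((X * A - X) j i) ^ 2 with ha
  set b : Fin n → ℝ := fun i => ∑ j, ((X * B - X) j i) ^ 2 with hb
  have hSA : SA.PosDef := posDef_S A hμ
  have hSB : SB.PosDef := posDef_S B hμ
  have hMsymm : Mᵀ = M := mpow_transpose hSA.1 _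
  have hA' : A = B + Δ := by rw [hΔdef]; abel
  -- Klein inequality
  have hklein : (mpow SB (p / 2)).trace
      ≤ (mpow SA (p / 2)).trace + (p / 2) * (M * (SB - SA)).trace :=
    klein hSB hSA (by linarith) (by linarith)
  -- column tangent inequalities
  have hcoltan : ∀ i, (b i + μ ^ 2) ^ (q / 2)
      ≤ (a i + μ ^ 2) ^ (q / 2) + (q / 2) * ν i * (b i - a i) := by
    intro i
    have hb0 : (0:ℝ) < b i + μ ^ 2 := by
      have : (0:ℝ) ≤ b i := Finset.sum_nonneg fun j _ => sq_nonneg _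
      positivity
    have ha0 : (0:ℝ) < a i + μ ^ 2 := by
      have : (0:ℝ) ≤ a i := Finset.sum_nonneg fun j _ => sq_nonneg _
      positivity
    have := tangent hb0 ha0 (by linarith : (0:ℝ) < q / 2) (by linarith : q / 2 < 1)
    calc (b i + μ ^ 2) ^ (q / 2)
        ≤ (a i + μ ^ 2) ^ (q / 2)
          + q / 2 * (a i + μ ^ 2) ^ (q / 2 - 1) * (b i + μ ^ 2 - (a i + μ ^ 2)) := this
      _ = (a i + μ ^ 2) ^ (q / 2) + (q / 2) * ν i * (b i - a i) := by
          rw [hν]; show _ = (a i + μ ^ 2) ^ (q / 2) + (q / 2) * (a i + μ ^ 2) ^ (q / 2 - 1) * (b i - a i); ring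
  -- algebra: expansion of SB - SA
  have E1 : SB - SA = -(Bᵀ * Δ) - Δᵀ * B - Δᵀ * Δ := by
    rw [hSAdef, hSBdef, hΔdef]
    simp only [transpose_sub, sub_mul, mul_sub]
    abel
  have E2 : (M * (SB - SA)).trace
      = -2 * (Δᵀ * (B * M)).trace - (Δᵀ * Δ * M).trace := by
    rw [E1]
    have t1 : (M * (Bᵀ * Δ)).trace = (Δᵀ * (B * M)).trace := by
      rw [← trace_transpose (M * (Bᵀ * Δ))]
      congr 1
      rw [transpose_mul, transpose_mul, hMsymm, transpose_transpose]
      simp only [mul_assoc]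
    have t2 : (M * (Δᵀ * B)).trace = (Δᵀ * (B * M)).trace := by
      rw [trace_mul_comm]
      congr 1
      simp only [mul_assoc]
    have t3 : (M * (Δᵀ * Δ)).trace = (Δᵀ * Δ * M).trace := by
      rw [trace_mul_comm]
    rw [show M * (-(Bᵀ * Δ) - Δᵀ * B - Δᵀ * Δ)
        = -(M * (Bᵀ * Δ)) - M * (Δᵀ * B) - M * (Δᵀ * Δ) by noncomm_ring]
    rw [trace_sub, trace_sub, trace_neg, t1, t2, t3]
    ring
  -- column difference expansion
  have hXent : X * A - X = (X * B - X) + X * Δ := by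
    rw [hΔdef, Matrix.mul_sub]
    abel
  have E3 : ∀ i, b i - a i
      = -2 * (∑ j, (X * B - X) j i * (X * Δ) j i) - ∑ j, ((X * Δ) j i) ^ 2 := by
    intro i
    have expand : a i = b i + (2 * ∑ j, (X * B - X) j i * (X * Δ) j i
        + ∑ j, ((X * Δ) j i) ^ 2) := by
      rw [ha]
      calc (∑ j, ((X * A - X) j i) ^ 2)
          = ∑ j, (((X * B - X) j i) ^ 2
            + (2 * ((X * B - X) j i * (X * Δ) j i) + ((X * Δ) j i) ^ 2)) := by
            refine Finset.sum_congr rfl fun j _ => ?_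
            rw [show (X * A - X) j i = (X * B - X) j i + (X * Δ) j i from by
              rw [hXent]; rfl]
            ring
        _ = b i + (2 * ∑ j, (X * B - X) j i * (X * Δ) j i + ∑ j, ((X * Δ) j i) ^ 2) := by
            rw [Finset.sum_add_distrib, Finset.sum_add_distrib, ← Finset.mul_sum, hb]
    linarith [expand]
  -- trace identification of the column cross term
  have E4 : (Δᵀ * (Xᵀ * ((X * B - X) * N))).trace
      = ∑ i, ν i * ∑ j, (X * B - X) j i * (X * Δ) j i := by
    rw [show Δᵀ * (Xᵀ * ((X * B - X) * N)) = Δᵀ * Xᵀ * ((X * B - X) * N) from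
      (Matrix.mul_assoc _ _ _).symm]
    rw [show Δᵀ * Xᵀ = (X * Δ)ᵀ by rw [transpose_mul]]
    rw [trace_transpose_mul']
    refine Finset.sum_congr rfl fun i _ => ?_
    rw [Finset.mul_sum]
    refine Finset.sum_congr rfl fun j _ => ?_
    rw [hNdef, Matrix.mul_diagonal]
    ring
  -- gradient equation: trace against Δ is zero
  have E6 : p * (Δᵀ * (B * M)).trace
      + (lam * q) * (Δᵀ * (Xᵀ * ((X * B - X) * N))).trace = 0 := by
    have h0 : (Δᵀ * (p • (B * M) + (lam * q) • (Xᵀ * ((X * B - X) * N)))).trace = 0 := by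
      rw [hupd]; simp
    rwa [Matrix.mul_add, Matrix.mul_smul, Matrix.mul_smul, trace_add, trace_smul, trace_smul,
      smul_eq_mul, smul_eq_mul] at h0
  -- nonnegativity of the column quadratic term
  have hν0 : ∀ i, 0 < ν i := fun i => by
    have : (0:ℝ) ≤ a i := Finset.sum_nonneg fun j _ => sq_nonneg _
    exact Real.rpow_pos_of_pos (by positivity) _
  have hcolquad : 0 ≤ ∑ i, ν i * ∑ j, ((X * Δ) j i) ^ 2 :=
    Finset.sum_nonneg fun i _ => mul_nonneg (hν0 i).le
      (Finset.sum_nonneg fun j _ => sq_nonneg _)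
  -- combine
  have total : (p / 2) * (M * (SB - SA)).trace
      + lam * ((q / 2) * ∑ i, ν i * (b i - a i))
      = -(p / 2) * (Δᵀ * Δ * M).trace
        - lam * (q / 2) * ∑ i, ν i * ∑ j, ((X * Δ) j i) ^ 2 := by
    have e5 : ∑ i, ν i * (b i - a i)
        = -2 * (Δᵀ * (Xᵀ * ((X * B - X) * N))).trace
          - ∑ i, ν i * ∑ j, ((X * Δ) j i) ^ 2 := by
      rw [E4]
      rw [show ∑ i, ν i * (b i - a i)
          = ∑ i, (-2 * (ν i * ∑ j, (X * B - X) j i * (X * Δ) j i)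
            - ν i * ∑ j, ((X * Δ) j i) ^ 2) from Finset.sum_congr rfl fun i _ => by
          rw [E3 i]; ring]
      rw [Finset.sum_sub_distrib, ← Finset.mul_sum]
    rw [E2, e5]
    linear_combination -E6
  -- final assembly
  have hsum : ∑ i, (b i + μ ^ 2) ^ (q / 2)
      ≤ ∑ i, (a i + μ ^ 2) ^ (q / 2) + (q / 2) * ∑ i, ν i * (b i - a i) := by
    rw [Finset.mul_sum, ← Finset.sum_add_distrib]
    refine Finset.sum_le_sum fun i _ => ?_
    have := hcoltan i
    linarith [this]
  have hJB : smoothJ X lam p q B μ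
      = (mpow SB (p / 2)).trace + lam * ∑ i, (b i + μ ^ 2) ^ (q / 2) := rfl
  have hJA : smoothJ X lam p q A μ
      = (mpow SA (p / 2)).trace + lam * ∑ i, (a i + μ ^ 2) ^ (q / 2) := rfl
  rw [hJB, hJA]
  have hlam' := hlam.le
  have hc2 : lam * ∑ i, (b i + μ ^ 2) ^ (q / 2)
      ≤ lam * (∑ i, (a i + μ ^ 2) ^ (q / 2) + (q / 2) * ∑ i, ν i * (b i - a i)) :=
    mul_le_mul_of_nonneg_left hsum hlam'
  have hquad2 : 0 ≤ lam * (q / 2) * ∑ i, ν i * ∑ j, ((X * Δ) j i) ^ 2 := by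
    apply mul_nonneg (by positivity) hcolquad
  nlinarith [hklein, hc2, total, hquad2]

/-- **Theorem 3 (3).** If the sequence `(Z_t)` satisfies the IRLS update equation for every `t`,
then `lim_{t→∞} ‖Z_t − Z_{t+1}‖_F = 0`, where `‖M‖_F = √(∑ᵢⱼ Mᵢⱼ²)` is the Frobenius norm. -/
theorem stmt_17 {d n : ℕ} (hn : 1 ≤ n) (X : Matrix (Fin d) (Fin n) ℝ) (lam p q μ : ℝ)
    (hlam : 0 < lam) (hμ : 0 < μ) (hp0 : 0 < p) (hp2 : p < 2) (hq0 : 0 < q) (hq2 : q < 2)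
    (Z : ℕ → Matrix (Fin n) (Fin n) ℝ)
    (hupd : ∀ t, p • (Z (t + 1) *
        mpow ((Z t)ᵀ * Z t + μ ^ 2 • (1 : Matrix (Fin n) (Fin n) ℝ)) (p / 2 - 1)) +
      (lam * q) • (Xᵀ * ((X * Z (t + 1) - X) *
        Matrix.diagonal fun i => (∑ j, ((X * Z t - X) j i) ^ 2 + μ ^ 2) ^ (q / 2 - 1))) = 0) :
    Filter.Tendsto (fun t => Real.sqrt (∑ i, ∑ j, ((Z t - Z (t + 1)) i j) ^ 2))
      Filter.atTop (nhds 0) := by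
  have hstep : ∀ t, smoothJ X lam p q (Z (t+1)) μ + (p/2) *
      ((Z t - Z (t+1))ᵀ * (Z t - Z (t+1)) *
        mpow ((Z t)ᵀ * Z t + μ ^ 2 • (1 : Matrix (Fin n) (Fin n) ℝ)) (p/2 - 1)).trace
      ≤ smoothJ X lam p q (Z t) μ := fun t =>
    step_ineq X hlam hμ hp0 hp2 hq0 hq2 (Z t) (Z (t+1)) (hupd t)
  set F : ℕ → ℝ := fun t => smoothJ X lam p q (Z t) μ with hFdef
  set D : ℕ → ℝ := fun t => ∑ i, ∑ j, ((Z t - Z (t+1)) i j) ^ 2 with hDdef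
  set Q : ℕ → ℝ := fun t => ((Z t - Z (t+1))ᵀ * (Z t - Z (t+1)) *
    mpow ((Z t)ᵀ * Z t + μ ^ 2 • (1 : Matrix (Fin n) (Fin n) ℝ)) (p/2 - 1)).trace with hQdef
  have hQ0 : ∀ t, 0 ≤ Q t := fun t => trQuad_nonneg hμ _ (Z t) (Z t - Z (t+1))
  have hmono : ∀ t, F (t+1) ≤ F t := by
    intro t
    have h := hstep t
    have h2 : 0 ≤ (p/2) * Q t := mul_nonneg (by linarith) (hQ0 t)
    simp only [hFdef]
    rw [hQdef] at h2
    linarith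
  have hF0 : ∀ t, F t ≤ F 0 := by
    intro t
    induction t with
    | zero => exact le_rfl
    | succ k ih => exact le_trans (hmono k) ih
  have hFnn : ∀ t, 0 ≤ F t := fun t => smoothJ_nonneg X hlam.le hμ (Z t)
  have htr_le : ∀ t, (mpow ((Z t)ᵀ * Z t + μ ^ 2 • (1 : Matrix (Fin n) (Fin n) ℝ))
      (p/2)).trace ≤ F 0 := fun t =>
    le_trans (trace_le_smoothJ X hlam.le (Z t)) (hF0 t)
  set c0 : ℝ := (max ((F 0) ^ (2/p)) 1) ^ (p/2 - 1) with hc0def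
  have hc0pos : 0 < c0 :=
    Real.rpow_pos_of_pos (lt_of_lt_of_le one_pos (le_max_right _ _)) _
  have hkey : ∀ t, c0 * D t ≤ Q t := fun t =>
    trQuad_lb hμ hp0 hp2 (hFnn 0) (Z t) (Z t - Z (t+1)) (htr_le t)
  have hc1 : 0 < p/2 * c0 := mul_pos (by linarith) hc0pos
  have hTele : ∀ T, ∑ t ∈ Finset.range T, (p/2 * c0) * D t ≤ F 0 := by
    intro T
    have h1 : ∑ t ∈ Finset.range T, (p/2 * c0) * D t
        ≤ ∑ t ∈ Finset.range T, (F t - F (t+1)) := by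
      refine Finset.sum_le_sum fun t _ => ?_
      have h3 := mul_le_mul_of_nonneg_left (hkey t) (by linarith : (0:ℝ) ≤ p/2)
      have h2 := hstep t
      have h4 : (p/2 * c0) * D t = p/2 * (c0 * D t) := by ring
      rw [h4]
      simp only [hFdef]
      rw [hQdef] at h3
      linarith
    have h5 : ∑ t ∈ Finset.range T, (F t - F (t+1)) = F 0 - F T :=
      Finset.sum_range_sub' F T
    rw [h5] at h1
    linarith [hFnn T]
  have hDnn : ∀ t, 0 ≤ D t := fun t =>
    Finset.sum_nonneg fun i _ => Finset.sum_nonneg fun j _ => sq_nonneg _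
  have hsummable : Summable D := by
    refine summable_of_sum_range_le hDnn (c := F 0 / (p/2 * c0)) fun T => ?_
    have h := hTele T
    rw [← Finset.mul_sum] at h
    rw [le_div_iff₀ hc1]
    linarith
  have htend : Filter.Tendsto D Filter.atTop (nhds 0) := hsummable.tendsto_atTop_zero
  have := (Real.continuous_sqrt.tendsto' 0 0 Real.sqrt_zero).comp htend
  exact this
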